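/- There exists a constant C > 0 such that for every function f in H^1 of the two-dimensional torus with mean zero, the L^4 norm of f satisfies ∫|f|^4 ≤ C (∫|f|^2)(∫|∇f|^2). -/

import Mathlib

open MeasureTheory Filter

noncomputable section

/-- The plane `ℝ²`, used as the universal cover of the two-dimensional torus `T²`. -/
abbrev D : Type := Fin 2 → ℝ

/-- The fundamental domain of the torus `T² = ℝ²/ℤ²`. -/
abbrev Torus : Set D := Set.Icc 0 1

/-- `f` is `ℤ²`-periodic, i.e. descends to the torus. -/
def PeriodicT {E : Type*} (f : D → E) : Prop :=
  ∀ (x : D) (k : Fin 2 → ℤ), f (x + fun i => (k i : ℝ)) = f x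

/-- Partial derivative `∂_j f`. -/
def pd (j : Fin 2) (f : D → ℝ) (x : D) : ℝ := fderiv ℝ f x (Pi.single j 1)

/-- Laplacian `Δ f`. -/
def lap (f : D → ℝ) (x : D) : ℝ := ∑ j : Fin 2, pd j (pd j f) x

/-- Squared gradient `|∇u|² = ∑_{j,i} (∂_j u^i)²` of an `ℝ³`-valued map. -/
def gradSq (u : D → Fin 3 → ℝ) (x : D) : ℝ :=
  ∑ j : Fin 2, ∑ i : Fin 3, (pd j (fun y => u y i) x) ^ 2

/-- The tension field `τ(u) = Δu + u|∇u|²`. -/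
def tension (u : D → Fin 3 → ℝ) (x : D) (i : Fin 3) : ℝ :=
  lap (fun y => u y i) x + u x i * gradSq u x

namespace Lady

open Set Real

local notation "II" => Set.Icc (0:ℝ) 1

lemma volI : volume (Set.Icc (0:ℝ) 1) = 1 := by
  rw [Real.volume_Icc]; norm_num

instance probI : IsProbabilityMeasure (volume.restrict (Set.Icc (0:ℝ) 1)) :=
  ⟨by rw [Measure.restrict_apply_univ, volI]⟩

lemma volT : volume Torus = 1 := by
  rw [Real.volume_Icc_pi]; simp

instance probT : IsProbabilityMeasure (volume.restrict Torus) :=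
  ⟨by rw [Measure.restrict_apply_univ, volT]⟩

lemma esymm (p : ℝ × ℝ) : (MeasurableEquiv.finTwoArrow (α := ℝ)).symm p = ![p.1, p.2] := by
  funext i
  fin_cases i <;> simp [MeasurableEquiv.finTwoArrow, MeasurableEquiv.piFinTwo]

lemma preimage_torus :
    (MeasurableEquiv.finTwoArrow (α := ℝ)).symm ⁻¹' Torus = II ×ˢ II := by
  ext p
  simp only [Set.mem_preimage, esymm, Set.mem_prod, Set.mem_Icc, Torus, Set.mem_Icc]
  constructor
  · rintro ⟨h0, h1⟩
    exact ⟨⟨h0 0, h1 0⟩, ⟨by simpa using h0 1, by simpa using h1 1⟩⟩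
  · rintro ⟨⟨a0, a1⟩, b0, b1⟩
    constructor <;> intro i <;> fin_cases i <;> simp [a0, a1, b0, b1]

/-- Transfer an integral over the torus to an iterated integral. -/
lemma transfer (g : D → ℝ) (hg : IntegrableOn (fun p : ℝ × ℝ => g ![p.1, p.2]) (II ×ˢ II)) :
    (∫ x in Torus, g x) = ∫ u in II, ∫ v in II, g ![u, v] := by
  have h1 := ((volume_preserving_finTwoArrow ℝ).symm).setIntegral_preimage_emb
    (MeasurableEquiv.finTwoArrow (α := ℝ)).symm.measurableEmbedding g Torus
  rw [← h1, preimage_torus]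
  have h2 : ∀ p : ℝ × ℝ, g ((MeasurableEquiv.finTwoArrow (α := ℝ)).symm p) = g ![p.1, p.2] := by
    intro p; rw [esymm]
  simp_rw [h2]
  rw [show (volume : Measure (ℝ × ℝ)) = (volume : Measure ℝ).prod volume from Measure.volume_eq_prod ℝ ℝ]
  exact setIntegral_prod _ (by rwa [← Measure.volume_eq_prod ℝ ℝ])

lemma swapI (g : ℝ → ℝ → ℝ)
    (hg : IntegrableOn (fun p : ℝ × ℝ => g p.1 p.2) (II ×ˢ II)) :
    ∫ u in II, ∫ v in II, g u v = ∫ v in II, ∫ u in II, g u v := by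
  have h : Integrable (Function.uncurry g)
      ((volume.restrict II).prod (volume.restrict II)) := by
    rw [Measure.prod_restrict]
    exact hg
  exact integral_integral_swap h

lemma par_left {g : ℝ → ℝ → ℝ}
    (hg : IntegrableOn (fun p : ℝ × ℝ => g p.1 p.2) (II ×ˢ II)) :
    IntegrableOn (fun u => ∫ v in II, g u v) II := by
  have h : Integrable (fun p : ℝ × ℝ => g p.1 p.2)
      ((volume.restrict II).prod (volume.restrict II)) := by
    rw [Measure.prod_restrict]; exact hg
  exact h.integral_prod_left

lemma par_right {g : ℝ → ℝ → ℝ}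
    (hg : IntegrableOn (fun p : ℝ × ℝ => g p.1 p.2) (II ×ˢ II)) :
    IntegrableOn (fun v => ∫ u in II, g u v) II := by
  have h : Integrable (fun p : ℝ × ℝ => g p.1 p.2)
      ((volume.restrict II).prod (volume.restrict II)) := by
    rw [Measure.prod_restrict]; exact hg
  exact h.integral_prod_right

lemma cont_integrableOn {g : ℝ × ℝ → ℝ} (hg : Continuous g) : IntegrableOn g (II ×ˢ II) :=
  hg.continuousOn.integrableOn_compact (isCompact_Icc.prod isCompact_Icc)

lemma cont_pd {f : D → ℝ} (hf : ContDiff ℝ 1 f) (j : Fin 2) : Continuous (pd j f) :=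
  ((hf.continuous_fderiv one_ne_zero).clm_apply continuous_const)

lemma cont_mk : Continuous (fun p : ℝ × ℝ => (![p.1, p.2] : D)) := by
  apply continuous_pi
  intro i
  fin_cases i <;> simp [continuous_fst, continuous_snd]

lemma single_zero : (Pi.single (0 : Fin 2) (1:ℝ)) = ![1, 0] := by
  funext i; fin_cases i <;> simp
lemma single_one : (Pi.single (1 : Fin 2) (1:ℝ)) = ![0, 1] := by
  funext i; fin_cases i <;> simp

lemma hasDeriv_fst {f : D → ℝ} (hf : ContDiff ℝ 1 f) (b a : ℝ) :
    HasDerivAt (fun t => f ![t, b]) (pd 0 f ![a, b]) a := by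
  have hc : HasDerivAt (fun t : ℝ => (![t, b] : D)) ![1, 0] a := by
    have h1 : (fun t : ℝ => (![t, b] : D)) = fun t => t • (![1, 0] : D) + ![0, b] := by
      funext t i; fin_cases i <;> simp
    rw [h1]
    simpa using ((hasDerivAt_id a).smul_const (![1, 0] : D)).add_const (![0, b] : D)
  have hd := (hf.differentiable one_ne_zero ![a, b]).hasFDerivAt
  have := hd.comp_hasDerivAt a hc
  simp only [pd, single_zero]; exact this

lemma hasDeriv_snd {f : D → ℝ} (hf : ContDiff ℝ 1 f) (a b : ℝ) :
    HasDerivAt (fun t => f ![a, t]) (pd 1 f ![a, b]) b := by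
  have hc : HasDerivAt (fun t : ℝ => (![a, t] : D)) ![0, 1] b := by
    have h1 : (fun t : ℝ => (![a, t] : D)) = fun t => t • (![0, 1] : D) + ![a, 0] := by
      funext t i; fin_cases i <;> simp
    rw [h1]
    simpa using ((hasDerivAt_id b).smul_const (![0, 1] : D)).add_const (![a, 0] : D)
  have hd := (hf.differentiable one_ne_zero ![a, b]).hasFDerivAt
  have := hd.comp_hasDerivAt b hc
  simp only [pd, single_one]; exact this

/-- FTC bound: `|h x - h y| ≤ ∫_I |h'|` for `x, y ∈ I`. -/
lemma ftc_bound {h h' : ℝ → ℝ} (hd : ∀ t, HasDerivAt h (h' t) t) (hc : Continuous h')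
    {x y : ℝ} (hx : x ∈ II) (hy : y ∈ II) :
    |h x - h y| ≤ ∫ t in II, |h' t| := by
  have heq : ∫ t in y..x, h' t = h x - h y :=
    intervalIntegral.integral_eq_sub_of_hasDerivAt (fun t _ => hd t)
      (hc.intervalIntegrable y x)
  rw [← heq]
  calc |∫ t in y..x, h' t| ≤ ∫ t in Set.uIoc y x, |h' t| := by
        simpa [Real.norm_eq_abs] using
          intervalIntegral.norm_integral_le_integral_norm_uIoc (f := h') (a := y) (b := x)
            (μ := volume)
    _ ≤ ∫ t in II, |h' t| := by
        apply setIntegral_mono_set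
        · exact (hc.abs.continuousOn).integrableOn_compact isCompact_Icc
        · exact Eventually.of_forall fun t => abs_nonneg _
        · refine HasSubset.Subset.eventuallyLE ?_
          exact (Set.Ioc_subset_Icc_self.trans (Set.uIcc_subset_Icc hy hx))

/-- Jensen: `(∫ h)² ≤ ∫ h²` on a probability measure. -/
lemma sq_integral_le {α : Type*} [MeasurableSpace α] {μ : Measure α} [IsProbabilityMeasure μ]
    {h : α → ℝ} (hh : Integrable h μ) (hh2 : Integrable (fun x => h x ^ 2) μ) :
    (∫ x, h x ∂μ) ^ 2 ≤ ∫ x, h x ^ 2 ∂μ := by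
  set c := ∫ x, h x ∂μ
  have key : 0 ≤ ∫ x, (h x - c) ^ 2 ∂μ := integral_nonneg fun x => sq_nonneg _
  have hexp : ∫ x, (h x - c) ^ 2 ∂μ = (∫ x, h x ^ 2 ∂μ) - c ^ 2 := by
    have e1 : Integrable (fun x => 2 * c * h x) μ := hh.const_mul _
    calc ∫ x, (h x - c) ^ 2 ∂μ = ∫ x, (h x ^ 2 - 2 * c * h x + c ^ 2) ∂μ := by
          congr 1; funext x; ring
      _ = (∫ x, h x ^ 2 ∂μ) - c ^ 2 := by
          rw [integral_add (f := fun x => h x ^ 2 - 2 * c * h x) (g := fun _ => c ^ 2)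
              (hh2.sub e1) (integrable_const _),
            integral_sub (f := fun x => h x ^ 2) (g := fun x => 2 * c * h x) hh2 e1,
            integral_const_mul, integral_const]
          simp [c]
          ring
  linarith [key, hexp ▸ key]

/-- Cauchy-Schwarz. -/
lemma cs {α : Type*} [MeasurableSpace α] {μ : Measure α} {f g : α → ℝ}
    (hf : Integrable (fun x => f x ^ 2) μ) (hg : Integrable (fun x => g x ^ 2) μ)
    (hfg : Integrable (fun x => |f x * g x|) μ) :
    ∫ x, |f x * g x| ∂μ ≤ Real.sqrt (∫ x, f x ^ 2 ∂μ) * Real.sqrt (∫ x, g x ^ 2 ∂μ) := by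
  set A := ∫ x, f x ^ 2 ∂μ with hA
  set B := ∫ x, g x ^ 2 ∂μ with hB
  have hA0 : 0 ≤ A := integral_nonneg fun x => sq_nonneg _
  have hB0 : 0 ≤ B := integral_nonneg fun x => sq_nonneg _
  have claim : ∀ δ : ℝ, 0 < δ → ∫ x, |f x * g x| ∂μ ≤ Real.sqrt ((A + δ) * (B + δ)) := by
    intro δ hδ
    have hAδ : 0 < A + δ := by linarith
    have hBδ : 0 < B + δ := by linarith
    set s := Real.sqrt (A + δ) with hs
    set t := Real.sqrt (B + δ) with ht
    have hs0 : 0 < s := Real.sqrt_pos.mpr hAδ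
    have ht0 : 0 < t := Real.sqrt_pos.mpr hBδ
    have hs2 : s ^ 2 = A + δ := Real.sq_sqrt hAδ.le
    have ht2 : t ^ 2 = B + δ := Real.sq_sqrt hBδ.le
    have hpt : ∀ x, 2 * s * t * |f x * g x| ≤ t ^ 2 * f x ^ 2 + s ^ 2 * g x ^ 2 := by
      intro x
      rw [abs_mul]
      nlinarith [sq_nonneg (t * |f x| - s * |g x|), abs_nonneg (f x), abs_nonneg (g x),
        sq_abs (f x), sq_abs (g x)]
    have hint : ∫ x, 2 * s * t * |f x * g x| ∂μ ≤ ∫ x, (t ^ 2 * f x ^ 2 + s ^ 2 * g x ^ 2) ∂μ :=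
      integral_mono (hfg.const_mul _) ((hf.const_mul _).add (hg.const_mul _)) hpt
    rw [integral_const_mul, integral_add (hf.const_mul _) (hg.const_mul _),
      integral_const_mul, integral_const_mul] at hint
    have hineq : 2 * s * t * ∫ x, |f x * g x| ∂μ ≤ 2 * (s * t) * (s * t) := by
      calc 2 * s * t * ∫ x, |f x * g x| ∂μ ≤ t ^ 2 * A + s ^ 2 * B := hint
        _ ≤ t ^ 2 * (A + δ) + s ^ 2 * (B + δ) := by nlinarith [sq_nonneg s, sq_nonneg t]
        _ = 2 * (s * t) * (s * t) := by rw [hs2, ht2]; nlinarith [hs2, ht2]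
    have hst : 0 < s * t := mul_pos hs0 ht0
    have : ∫ x, |f x * g x| ∂μ ≤ s * t := by nlinarith [hst]
    rwa [Real.sqrt_mul hAδ.le, ← hs, ← ht]
  have hlim : Tendsto (fun δ : ℝ => Real.sqrt ((A + δ) * (B + δ))) (nhdsWithin 0 (Set.Ioi 0))
      (nhds (Real.sqrt A * Real.sqrt B)) := by
    have hc : Continuous fun δ : ℝ => Real.sqrt ((A + δ) * (B + δ)) := by
      continuity
    have := hc.tendsto 0
    simp only [add_zero] at this
    rw [← Real.sqrt_mul hA0]
    exact this.mono_left nhdsWithin_le_nhds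
  exact ge_of_tendsto hlim (eventually_nhdsWithin_of_forall fun δ hδ => claim δ hδ)


lemma prod_iter (g : ℝ × ℝ → ℝ) (hg : IntegrableOn g (II ×ˢ II)) :
    ∫ p, g p ∂((volume.restrict II).prod (volume.restrict II)) = ∫ u in II, ∫ v in II, g (u, v) := by
  have h : Integrable (Function.uncurry fun u v => g (u, v))
      ((volume.restrict II).prod (volume.restrict II)) := by
    rw [Measure.prod_restrict]
    exact hg
  rw [← integral_integral h]

lemma int_prod_restrict {g : ℝ × ℝ → ℝ} (hg : IntegrableOn g (II ×ˢ II)) :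
    Integrable g ((volume.restrict II).prod (volume.restrict II)) := by
  rw [Measure.prod_restrict]
  exact hg


variable {f : D → ℝ}

set_option maxHeartbeats 1000000 in
lemma main (hf : ContDiff ℝ 1 f) (hmean : (∫ x in Torus, f x) = 0) :
    (∫ x in Torus, (f x) ^ 4) ≤
      16 * (∫ x in Torus, (f x) ^ 2) * (∫ x in Torus, ∑ j : Fin 2, (pd j f x) ^ 2) := by
  have hIcc : MeasurableSet (Set.Icc (0:ℝ) 1) := measurableSet_Icc
  set φ : ℝ × ℝ → ℝ := fun p => f ![p.1, p.2] with hφdef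
  set P0 : ℝ × ℝ → ℝ := fun p => pd 0 f ![p.1, p.2] with hP0def
  set P1 : ℝ × ℝ → ℝ := fun p => pd 1 f ![p.1, p.2] with hP1def
  have cφ : Continuous φ := hf.continuous.comp cont_mk
  have cP0 : Continuous P0 := (cont_pd hf 0).comp cont_mk
  have cP1 : Continuous P1 := (cont_pd hf 1).comp cont_mk
  -- slice integrability helpers
  have sliceL : ∀ {g : ℝ × ℝ → ℝ}, Continuous g → ∀ u : ℝ,
      IntegrableOn (fun v => g (u, v)) II := fun hg u =>
    (hg.comp (Continuous.prodMk_right u)).continuousOn.integrableOn_compact isCompact_Icc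
  have sliceR : ∀ {g : ℝ × ℝ → ℝ}, Continuous g → ∀ v : ℝ,
      IntegrableOn (fun t => g (t, v)) II := fun hg v =>
    (hg.comp (continuous_id.prodMk continuous_const)).continuousOn.integrableOn_compact
      isCompact_Icc
  set N : ℝ := ∫ u in II, ∫ v in II, φ (u, v) ^ 2 with hNdef
  set G0 : ℝ := ∫ u in II, ∫ v in II, P0 (u, v) ^ 2 with hG0def
  set G1 : ℝ := ∫ u in II, ∫ v in II, P1 (u, v) ^ 2 with hG1def
  have hN0 : 0 ≤ N := integral_nonneg fun u => integral_nonneg fun v => sq_nonneg _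
  have hG00 : 0 ≤ G0 := integral_nonneg fun u => integral_nonneg fun v => sq_nonneg _
  have hG10 : 0 ≤ G1 := integral_nonneg fun u => integral_nonneg fun v => sq_nonneg _
  -- transfers of the statement integrals
  have hN : (∫ x in Torus, (f x) ^ 2) = N :=
    transfer (fun x => f x ^ 2) (cont_integrableOn (cφ.pow 2))
  have hG : (∫ x in Torus, ∑ j : Fin 2, (pd j f x) ^ 2) = G0 + G1 := by
    have int0 : IntegrableOn (fun x : D => (pd 0 f x) ^ 2) Torus :=
      ((cont_pd hf 0).pow 2).continuousOn.integrableOn_compact isCompact_Icc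
    have int1 : IntegrableOn (fun x : D => (pd 1 f x) ^ 2) Torus :=
      ((cont_pd hf 1).pow 2).continuousOn.integrableOn_compact isCompact_Icc
    have hsplit : (∫ x in Torus, ∑ j : Fin 2, (pd j f x) ^ 2)
        = (∫ x in Torus, (pd 0 f x) ^ 2) + ∫ x in Torus, (pd 1 f x) ^ 2 := by
      rw [← integral_add int0 int1]
      exact setIntegral_congr_fun measurableSet_Icc fun x _ => by simp [Fin.sum_univ_two]
    rw [hsplit, transfer (fun x => (pd 0 f x) ^ 2) (cont_integrableOn (cP0.pow 2)),
      transfer (fun x => (pd 1 f x) ^ 2) (cont_integrableOn (cP1.pow 2))]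
  -- the one-variable gradient integrals
  obtain ⟨a, hadef⟩ : ∃ a' : ℝ → ℝ, a' = fun v => ∫ t in II, P0 (t, v) ^ 2 := ⟨_, rfl⟩
  obtain ⟨b, hbdef⟩ : ∃ b' : ℝ → ℝ, b' = fun u => ∫ t in II, P1 (u, t) ^ 2 := ⟨_, rfl⟩
  have ha0 : ∀ v, 0 ≤ a v := by
    intro v; rw [hadef]; exact integral_nonneg fun t => sq_nonneg _
  have hb0 : ∀ u, 0 ≤ b u := by
    intro u; rw [hbdef]; exact integral_nonneg fun t => sq_nonneg _
  have ha_int : IntegrableOn a II := by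
    rw [hadef]; exact par_right (cont_integrableOn (cP0.pow 2))
  have hb_int : IntegrableOn b II := by
    rw [hbdef]; exact par_left (cont_integrableOn (cP1.pow 2))
  have hIa : (∫ v in II, a v) = G0 := by
    simp only [hadef]
    exact (swapI _ (cont_integrableOn (cP0.pow 2))).symm
  have hIb : (∫ u in II, b u) = G1 := by
    simp only [hbdef]
    rfl
  -- pointwise FTC-CS estimates
  have hP1e : ∀ (v : ℝ) {u y : ℝ}, u ∈ II → y ∈ II → (φ (u, v) - φ (y, v)) ^ 2 ≤ a v := by
    intro v u y hu hy
    rw [hadef]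
    have hd : ∀ t, HasDerivAt (fun t => φ (t, v)) (P0 (t, v)) t := fun t => hasDeriv_fst hf v t
    have hcont : Continuous fun t => P0 (t, v) :=
      cP0.comp (continuous_id.prodMk continuous_const)
    have h1 := ftc_bound hd hcont hu hy
    have h2 : (φ (u, v) - φ (y, v)) ^ 2 ≤ (∫ t in II, |P0 (t, v)|) ^ 2 := by
      rw [← sq_abs]
      exact pow_le_pow_left₀ (abs_nonneg _) h1 2
    refine h2.trans ?_
    have h3 := sq_integral_le (μ := volume.restrict II) (h := fun t => |P0 (t, v)|)
      (hcont.abs.continuousOn.integrableOn_compact isCompact_Icc)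
      (by simpa [sq_abs, IntegrableOn] using sliceR (cP0.pow 2) v)
    simpa [sq_abs] using h3
  have hP2e : ∀ (u : ℝ) {v w : ℝ}, v ∈ II → w ∈ II → (φ (u, v) - φ (u, w)) ^ 2 ≤ b u := by
    intro u v w hv hw
    rw [hbdef]
    have hd : ∀ t, HasDerivAt (fun t => φ (u, t)) (P1 (u, t)) t := fun t => hasDeriv_snd hf u t
    have hcont : Continuous fun t => P1 (u, t) := cP1.comp (Continuous.prodMk_right u)
    have h1 := ftc_bound hd hcont hv hw
    have h2 : (φ (u, v) - φ (u, w)) ^ 2 ≤ (∫ t in II, |P1 (u, t)|) ^ 2 := by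
      rw [← sq_abs]
      exact pow_le_pow_left₀ (abs_nonneg _) h1 2
    refine h2.trans ?_
    have h3 := sq_integral_le (μ := volume.restrict II) (h := fun t => |P1 (u, t)|)
      (hcont.abs.continuousOn.integrableOn_compact isCompact_Icc)
      (by simpa [sq_abs, IntegrableOn] using sliceL (cP1.pow 2) u)
    simpa [sq_abs] using h3
  -- integrability of y ↦ b (y 0) on the torus
  have hby_prod : IntegrableOn (fun p : ℝ × ℝ => b p.1) (II ×ˢ II) := by
    have h1 : Integrable (fun z : ℝ × ℝ => b z.1 * (fun _ : ℝ => (1:ℝ)) z.2)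
        ((volume.restrict II).prod (volume.restrict II)) :=
      Integrable.mul_prod hb_int (integrable_const 1)
    rw [Measure.prod_restrict, ← Measure.volume_eq_prod] at h1
    simpa [IntegrableOn] using h1
  have hbT_int : IntegrableOn (fun y : D => b (y 0)) Torus := by
    have h2 := (((volume_preserving_finTwoArrow ℝ).symm _).restrict_preimage_emb
      (MeasurableEquiv.finTwoArrow (α := ℝ)).symm.measurableEmbedding Torus)
    rw [preimage_torus] at h2
    have h3 := (h2.integrable_comp_emb
      (MeasurableEquiv.finTwoArrow (α := ℝ)).symm.measurableEmbedding
      (g := fun y : D => b (y 0)))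
    apply h3.mp
    have hcomp : ((fun y : D => b (y 0)) ∘ (MeasurableEquiv.finTwoArrow (α := ℝ)).symm)
        = fun p : ℝ × ℝ => b p.1 := by
      funext p; rw [Function.comp_apply, esymm]; simp
    rw [hcomp]
    exact hby_prod
  have hbT : (∫ y in Torus, b (y 0)) = G1 := by
    have h1 := transfer (fun y : D => b (y 0)) (by simpa using hby_prod)
    rw [h1]
    have h2 : ∀ u : ℝ, (∫ _v in II, b (((![u, _v] : D)) 0)) = b u := by
      intro u
      simp [integral_const, measure_univ]
    calc (∫ u in II, ∫ v in II, b ((![u, v] : D) 0)) = ∫ u in II, b u :=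
          setIntegral_congr_fun hIcc fun u _ => h2 u
      _ = G1 := hIb
  have hf_intT : IntegrableOn f Torus :=
    hf.continuous.continuousOn.integrableOn_compact isCompact_Icc
  -- Poincaré: pointwise bound
  have key : ∀ {u v : ℝ}, u ∈ II → v ∈ II → φ (u, v) ^ 2 ≤ 2 * a v + 2 * G1 := by
    intro u v hu hv
    set c : ℝ := φ (u, v) with hcdef
    have hc_eq : c = ∫ y in Torus, (c - f y) := by
      rw [integral_sub (integrable_const c) hf_intT, hmean]
      simp [integral_const, measure_univ]
    have hsq : c ^ 2 ≤ ∫ y in Torus, (c - f y) ^ 2 := by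
      calc c ^ 2 = (∫ y in Torus, (c - f y)) ^ 2 := by rw [← hc_eq]
        _ ≤ ∫ y in Torus, (c - f y) ^ 2 :=
            sq_integral_le ((integrable_const c).sub hf_intT)
              (((continuous_const.sub hf.continuous).pow 2).continuousOn.integrableOn_compact
                isCompact_Icc)
    have hpt : ∀ y ∈ Torus, (c - f y) ^ 2 ≤ 2 * a v + 2 * b (y 0) := by
      intro y hy
      have hy0 : y 0 ∈ II := ⟨hy.1 0, hy.2 0⟩
      have hy1 : y 1 ∈ II := ⟨hy.1 1, hy.2 1⟩
      have hyeq : f y = φ (y 0, y 1) := by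
        have : y = ![y 0, y 1] := by
          funext i; fin_cases i <;> simp
        rw [hφdef]; exact congrArg f this
      have e1 : (c - φ (y 0, v)) ^ 2 ≤ a v := hP1e v hu hy0
      have e2 : (φ (y 0, v) - φ (y 0, y 1)) ^ 2 ≤ b (y 0) := hP2e (y 0) hv hy1
      rw [hyeq]
      nlinarith [sq_nonneg ((c - φ (y 0, v)) - (φ (y 0, v) - φ (y 0, y 1)))]
    have hint2 : (∫ y in Torus, (c - f y) ^ 2) ≤ ∫ y in Torus, (2 * a v + 2 * b (y 0)) := by
      apply setIntegral_mono_on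
        (((continuous_const.sub hf.continuous).pow 2).continuousOn.integrableOn_compact
          isCompact_Icc)
        ((integrableOn_const (by rw [volT]; norm_num)).add (hbT_int.const_mul 2))
        measurableSet_Icc hpt
    have hint3 : (∫ y in Torus, (2 * a v + 2 * b (y 0))) = 2 * a v + 2 * G1 := by
      rw [integral_add (integrableOn_const (C := 2 * a v) (s := Torus) (μ := volume) (by rw [volT]; norm_num))
        (hbT_int.const_mul 2), integral_const, integral_const_mul, hbT]
      simp [measure_univ]
    calc φ (u, v) ^ 2 = c ^ 2 := by rw [hcdef]
      _ ≤ ∫ y in Torus, (c - f y) ^ 2 := hsq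
      _ ≤ 2 * a v + 2 * G1 := by rw [← hint3]; exact hint2
  -- Poincaré inequality
  have hPoin : N ≤ 2 * G0 + 2 * G1 := by
    have hconst : (∫ v in II, (2 * a v + 2 * G1)) = 2 * G0 + 2 * G1 := by
      rw [integral_add (ha_int.const_mul 2)
        (integrableOn_const (by rw [volI]; norm_num)),
        integral_const_mul, hIa, integral_const]
      simp [measure_univ]
    have step : N ≤ ∫ _u in II, (2 * G0 + 2 * G1) := by
      rw [hNdef]
      apply setIntegral_mono_on (par_left (cont_integrableOn (cφ.pow 2)))
        (integrableOn_const (by rw [volI]; norm_num)) measurableSet_Icc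
      intro u hu
      have inner : (∫ v in II, φ (u, v) ^ 2) ≤ ∫ v in II, (2 * a v + 2 * G1) := by
        apply setIntegral_mono_on (sliceL (cφ.pow 2) u)
          ((ha_int.const_mul 2).add (integrableOn_const (by rw [volI]; norm_num)))
          measurableSet_Icc
        intro v hv
        exact key hu hv
      rw [← hconst]; exact inner
    calc N ≤ ∫ _u in II, (2 * G0 + 2 * G1) := step
      _ = 2 * G0 + 2 * G1 := by simp [integral_const, measure_univ]
  -- the averaged functions A and B
  obtain ⟨A, hAdef⟩ : ∃ A' : ℝ → ℝ,
      A' = fun v => (∫ t in II, φ (t, v) ^ 2) + ∫ t in II, |2 * φ (t, v) * P0 (t, v)| := ⟨_, rfl⟩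
  obtain ⟨B, hBdef⟩ : ∃ B' : ℝ → ℝ,
      B' = fun u => (∫ t in II, φ (u, t) ^ 2) + ∫ t in II, |2 * φ (u, t) * P1 (u, t)| := ⟨_, rfl⟩
  have cabs0 : Continuous fun p : ℝ × ℝ => |2 * φ p * P0 p| :=
    ((continuous_const.mul cφ).mul cP0).abs
  have cabs1 : Continuous fun p : ℝ × ℝ => |2 * φ p * P1 p| :=
    ((continuous_const.mul cφ).mul cP1).abs
  have hA0 : ∀ v, 0 ≤ A v := by
    intro v; rw [hAdef]
    exact add_nonneg (integral_nonneg fun t => sq_nonneg _)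
      (integral_nonneg fun t => abs_nonneg _)
  have hB0 : ∀ u, 0 ≤ B u := by
    intro u; rw [hBdef]
    exact add_nonneg (integral_nonneg fun t => sq_nonneg _)
      (integral_nonneg fun t => abs_nonneg _)
  have hA_int : IntegrableOn A II := by
    rw [hAdef]
    exact (par_right (cont_integrableOn (cφ.pow 2))).add (par_right (cont_integrableOn cabs0))
  have hB_int : IntegrableOn B II := by
    rw [hBdef]
    exact (par_left (cont_integrableOn (cφ.pow 2))).add (par_left (cont_integrableOn cabs1))
  -- the sup-type bounds
  have hL3 : ∀ {u v : ℝ}, u ∈ II → φ (u, v) ^ 2 ≤ A v := by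
    intro u v hu
    rw [hAdef]
    have hd : ∀ t, HasDerivAt (fun t => φ (t, v) ^ 2) (2 * φ (t, v) * P0 (t, v)) t := by
      intro t
      have h1 := (hasDeriv_fst hf v t).pow 2
      norm_num at h1
      exact h1
    have hcont : Continuous fun t => 2 * φ (t, v) * P0 (t, v) :=
      (continuous_const.mul (cφ.comp (continuous_id.prodMk continuous_const))).mul
        (cP0.comp (continuous_id.prodMk continuous_const))
    have hK0 : IntegrableOn (fun y : ℝ => (∫ t in II, |2 * φ (t, v) * P0 (t, v)|)) II :=
      integrableOn_const (by rw [volI]; norm_num)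
    calc φ (u, v) ^ 2 = ∫ (_y : ℝ) in II, φ (u, v) ^ 2 := by
          simp [integral_const, measure_univ]
      _ ≤ ∫ y in II, (φ (y, v) ^ 2 + ∫ t in II, |2 * φ (t, v) * P0 (t, v)|) := by
          apply setIntegral_mono_on
            (integrableOn_const (by rw [volI]; norm_num))
            ((sliceR (cφ.pow 2) v).add hK0) measurableSet_Icc
          intro y hy
          show φ (u, v) ^ 2 ≤ φ (y, v) ^ 2 + ∫ t in II, |2 * φ (t, v) * P0 (t, v)|
          have h1 : |φ (u, v) ^ 2 - φ (y, v) ^ 2| ≤ ∫ t in II, |2 * φ (t, v) * P0 (t, v)| :=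
            ftc_bound hd hcont hu hy
          have h2 : φ (u, v) ^ 2 - φ (y, v) ^ 2 ≤ |φ (u, v) ^ 2 - φ (y, v) ^ 2| :=
            le_abs_self _
          linarith
      _ = (∫ t in II, φ (t, v) ^ 2) + ∫ t in II, |2 * φ (t, v) * P0 (t, v)| := by
          rw [integral_add (f := fun y => φ (y, v) ^ 2) (sliceR (g := fun p => φ p ^ 2) (cφ.pow 2) v) hK0, integral_const]
          simp [measure_univ]
  have hL3' : ∀ {u v : ℝ}, v ∈ II → φ (u, v) ^ 2 ≤ B u := by
    intro u v hv
    rw [hBdef]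
    have hd : ∀ t, HasDerivAt (fun t => φ (u, t) ^ 2) (2 * φ (u, t) * P1 (u, t)) t := by
      intro t
      have h1 := (hasDeriv_snd hf u t).pow 2
      norm_num at h1
      exact h1
    have hcont : Continuous fun t => 2 * φ (u, t) * P1 (u, t) :=
      (continuous_const.mul (cφ.comp (Continuous.prodMk_right u))).mul
        (cP1.comp (Continuous.prodMk_right u))
    have hK0 : IntegrableOn (fun y : ℝ => (∫ t in II, |2 * φ (u, t) * P1 (u, t)|)) II :=
      integrableOn_const (by rw [volI]; norm_num)
    calc φ (u, v) ^ 2 = ∫ (_y : ℝ) in II, φ (u, v) ^ 2 := by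
          simp [integral_const, measure_univ]
      _ ≤ ∫ y in II, (φ (u, y) ^ 2 + ∫ t in II, |2 * φ (u, t) * P1 (u, t)|) := by
          apply setIntegral_mono_on
            (integrableOn_const (by rw [volI]; norm_num))
            ((sliceL (cφ.pow 2) u).add hK0) measurableSet_Icc
          intro y hy
          show φ (u, v) ^ 2 ≤ φ (u, y) ^ 2 + ∫ t in II, |2 * φ (u, t) * P1 (u, t)|
          have h1 : |φ (u, v) ^ 2 - φ (u, y) ^ 2| ≤ ∫ t in II, |2 * φ (u, t) * P1 (u, t)| :=
            ftc_bound hd hcont hv hy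
          have h2 : φ (u, v) ^ 2 - φ (u, y) ^ 2 ≤ |φ (u, v) ^ 2 - φ (u, y) ^ 2| :=
            le_abs_self _
          linarith
      _ = (∫ t in II, φ (u, t) ^ 2) + ∫ t in II, |2 * φ (u, t) * P1 (u, t)| := by
          rw [integral_add (f := fun y => φ (u, y) ^ 2) (sliceL (g := fun p => φ p ^ 2) (cφ.pow 2) u) hK0, integral_const]
          simp [measure_univ]
  -- the L4 bound by the product
  have hmain1 : (∫ u in II, ∫ v in II, φ (u, v) ^ 4) ≤ (∫ u in II, B u) * (∫ v in II, A v) := by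
    have hcA0 : 0 ≤ ∫ v in II, A v := integral_nonneg hA0
    calc (∫ u in II, ∫ v in II, φ (u, v) ^ 4)
        ≤ ∫ u in II, (B u * ∫ v in II, A v) := by
          apply setIntegral_mono_on (par_left (cont_integrableOn (cφ.pow 4)))
            (hB_int.mul_const _) measurableSet_Icc
          intro u hu
          calc (∫ v in II, φ (u, v) ^ 4) ≤ ∫ v in II, B u * A v := by
                apply setIntegral_mono_on (sliceL (cφ.pow 4) u)
                  (hA_int.const_mul _) measurableSet_Icc
                intro v hv
                have e1 : φ (u, v) ^ 2 ≤ B u := hL3' hv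
                have e2 : φ (u, v) ^ 2 ≤ A v := hL3 hu
                calc φ (u, v) ^ 4 = φ (u, v) ^ 2 * φ (u, v) ^ 2 := by ring
                  _ ≤ B u * A v := mul_le_mul e1 e2 (sq_nonneg _) (hB0 u)
            _ = B u * ∫ v in II, A v := integral_const_mul _ _
      _ = (∫ u in II, B u) * ∫ v in II, A v := integral_mul_const _ _
  -- Cauchy-Schwarz bounds for the cross terms
  have sqrt4 : Real.sqrt 4 = 2 := by
    rw [show (4 : ℝ) = 2 ^ 2 by norm_num, Real.sqrt_sq (by norm_num : (0:ℝ) ≤ 2)]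
  have hcs0 : (∫ u in II, ∫ v in II, |2 * φ (u, v) * P0 (u, v)|)
      ≤ 2 * (Real.sqrt N * Real.sqrt G0) := by
    have h1 : Integrable (fun p : ℝ × ℝ => (2 * φ p) ^ 2)
        ((volume.restrict II).prod (volume.restrict II)) :=
      int_prod_restrict (cont_integrableOn ((continuous_const.mul cφ).pow 2))
    have h2 : Integrable (fun p : ℝ × ℝ => P0 p ^ 2)
        ((volume.restrict II).prod (volume.restrict II)) :=
      int_prod_restrict (cont_integrableOn (cP0.pow 2))
    have h3 : Integrable (fun p : ℝ × ℝ => |(2 * φ p) * P0 p|)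
        ((volume.restrict II).prod (volume.restrict II)) :=
      int_prod_restrict (cont_integrableOn cabs0)
    have hcs := cs h1 h2 h3
    rw [prod_iter _ (cont_integrableOn cabs0)] at hcs
    have e1 : (∫ p : ℝ × ℝ, (2 * φ p) ^ 2 ∂((volume.restrict II).prod (volume.restrict II)))
        = 4 * N := by
      rw [show (fun p : ℝ × ℝ => (2 * φ p) ^ 2) = fun p => 4 * φ p ^ 2 from
        funext fun p => by ring, integral_const_mul,
        prod_iter (fun p => φ p ^ 2) (cont_integrableOn (cφ.pow 2))]
    have e2 : (∫ p : ℝ × ℝ, P0 p ^ 2 ∂((volume.restrict II).prod (volume.restrict II)))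
        = G0 := by
      rw [prod_iter (fun p => P0 p ^ 2) (cont_integrableOn (cP0.pow 2))]
    rw [e1, e2, Real.sqrt_mul (by norm_num : (0:ℝ) ≤ 4), sqrt4] at hcs
    calc (∫ u in II, ∫ v in II, |2 * φ (u, v) * P0 (u, v)|) ≤ 2 * Real.sqrt N * Real.sqrt G0 :=
          hcs
      _ = 2 * (Real.sqrt N * Real.sqrt G0) := by ring
  have hcs1 : (∫ u in II, ∫ v in II, |2 * φ (u, v) * P1 (u, v)|)
      ≤ 2 * (Real.sqrt N * Real.sqrt G1) := by
    have h1 : Integrable (fun p : ℝ × ℝ => (2 * φ p) ^ 2)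
        ((volume.restrict II).prod (volume.restrict II)) :=
      int_prod_restrict (cont_integrableOn ((continuous_const.mul cφ).pow 2))
    have h2 : Integrable (fun p : ℝ × ℝ => P1 p ^ 2)
        ((volume.restrict II).prod (volume.restrict II)) :=
      int_prod_restrict (cont_integrableOn (cP1.pow 2))
    have h3 : Integrable (fun p : ℝ × ℝ => |(2 * φ p) * P1 p|)
        ((volume.restrict II).prod (volume.restrict II)) :=
      int_prod_restrict (cont_integrableOn cabs1)
    have hcs := cs h1 h2 h3
    rw [prod_iter _ (cont_integrableOn cabs1)] at hcs
    have e1 : (∫ p : ℝ × ℝ, (2 * φ p) ^ 2 ∂((volume.restrict II).prod (volume.restrict II)))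
        = 4 * N := by
      rw [show (fun p : ℝ × ℝ => (2 * φ p) ^ 2) = fun p => 4 * φ p ^ 2 from
        funext fun p => by ring, integral_const_mul,
        prod_iter (fun p => φ p ^ 2) (cont_integrableOn (cφ.pow 2))]
    have e2 : (∫ p : ℝ × ℝ, P1 p ^ 2 ∂((volume.restrict II).prod (volume.restrict II)))
        = G1 := by
      rw [prod_iter (fun p => P1 p ^ 2) (cont_integrableOn (cP1.pow 2))]
    rw [e1, e2, Real.sqrt_mul (by norm_num : (0:ℝ) ≤ 4), sqrt4] at hcs
    calc (∫ u in II, ∫ v in II, |2 * φ (u, v) * P1 (u, v)|) ≤ 2 * Real.sqrt N * Real.sqrt G1 :=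
          hcs
      _ = 2 * (Real.sqrt N * Real.sqrt G1) := by ring
  -- bound ∫ A and ∫ B
  have hIA : (∫ v in II, A v) ≤ N + 2 * (Real.sqrt N * Real.sqrt G0) := by
    have step1 : (∫ v in II, A v)
        = (∫ v in II, ∫ t in II, φ (t, v) ^ 2) + ∫ v in II, ∫ t in II, |2 * φ (t, v) * P0 (t, v)| := by
      simp only [hAdef]
      exact integral_add (par_right (cont_integrableOn (cφ.pow 2)))
        (par_right (cont_integrableOn cabs0))
    have e1 : (∫ v in II, ∫ t in II, φ (t, v) ^ 2) = N :=
      (swapI _ (cont_integrableOn (cφ.pow 2))).symm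
    have e2 : (∫ v in II, ∫ t in II, |2 * φ (t, v) * P0 (t, v)|)
        = ∫ u in II, ∫ v in II, |2 * φ (u, v) * P0 (u, v)| :=
      (swapI _ (cont_integrableOn cabs0)).symm
    rw [step1, e1, e2]
    linarith [hcs0]
  have hIB : (∫ u in II, B u) ≤ N + 2 * (Real.sqrt N * Real.sqrt G1) := by
    have step1 : (∫ u in II, B u)
        = (∫ u in II, ∫ t in II, φ (u, t) ^ 2) + ∫ u in II, ∫ t in II, |2 * φ (u, t) * P1 (u, t)| := by
      simp only [hBdef]
      exact integral_add (par_left (cont_integrableOn (cφ.pow 2)))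
        (par_left (cont_integrableOn cabs1))
    rw [step1]
    have e1 : (∫ u in II, ∫ t in II, φ (u, t) ^ 2) = N := rfl
    rw [e1]
    linarith [hcs1]
  -- final numerics
  set G : ℝ := G0 + G1 with hGdef
  have hG0' : 0 ≤ G := add_nonneg hG00 hG10
  have hsN : 0 ≤ Real.sqrt N := Real.sqrt_nonneg _
  have hsG : 0 ≤ Real.sqrt G := Real.sqrt_nonneg _
  have hsG0 : Real.sqrt G0 ≤ Real.sqrt G :=
    Real.sqrt_le_sqrt (by rw [hGdef]; linarith)
  have hsG1 : Real.sqrt G1 ≤ Real.sqrt G :=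
    Real.sqrt_le_sqrt (by rw [hGdef]; linarith)
  have hsqrt2 : Real.sqrt 2 ≤ 2 := by
    nlinarith [Real.sq_sqrt (by norm_num : (0:ℝ) ≤ 2), Real.sqrt_nonneg 2]
  have hNG : Real.sqrt N ≤ 2 * Real.sqrt G := by
    calc Real.sqrt N ≤ Real.sqrt (2 * G) := Real.sqrt_le_sqrt (by rw [hGdef]; linarith [hPoin])
      _ = Real.sqrt 2 * Real.sqrt G := Real.sqrt_mul (by norm_num) _
      _ ≤ 2 * Real.sqrt G := mul_le_mul_of_nonneg_right hsqrt2 hsG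
  have hNeq : N = Real.sqrt N * Real.sqrt N := (Real.mul_self_sqrt hN0).symm
  have hGeq : G = Real.sqrt G * Real.sqrt G := (Real.mul_self_sqrt hG0').symm
  have hA4 : (∫ v in II, A v) ≤ 4 * (Real.sqrt N * Real.sqrt G) := by
    have : N ≤ Real.sqrt N * (2 * Real.sqrt G) := by
      calc N = Real.sqrt N * Real.sqrt N := hNeq
        _ ≤ Real.sqrt N * (2 * Real.sqrt G) := mul_le_mul_of_nonneg_left hNG hsN
    have h2 : Real.sqrt N * Real.sqrt G0 ≤ Real.sqrt N * Real.sqrt G :=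
      mul_le_mul_of_nonneg_left hsG0 hsN
    calc (∫ v in II, A v) ≤ N + 2 * (Real.sqrt N * Real.sqrt G0) := hIA
      _ ≤ 4 * (Real.sqrt N * Real.sqrt G) := by nlinarith
  have hB4 : (∫ u in II, B u) ≤ 4 * (Real.sqrt N * Real.sqrt G) := by
    have : N ≤ Real.sqrt N * (2 * Real.sqrt G) := by
      calc N = Real.sqrt N * Real.sqrt N := hNeq
        _ ≤ Real.sqrt N * (2 * Real.sqrt G) := mul_le_mul_of_nonneg_left hNG hsN
    have h2 : Real.sqrt N * Real.sqrt G1 ≤ Real.sqrt N * Real.sqrt G :=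
      mul_le_mul_of_nonneg_left hsG1 hsN
    calc (∫ u in II, B u) ≤ N + 2 * (Real.sqrt N * Real.sqrt G1) := hIB
      _ ≤ 4 * (Real.sqrt N * Real.sqrt G) := by nlinarith
  have hL4 : (∫ x in Torus, (f x) ^ 4) = ∫ u in II, ∫ v in II, φ (u, v) ^ 4 :=
    transfer (fun x => f x ^ 4) (cont_integrableOn (cφ.pow 4))
  have hfinal : (∫ u in II, ∫ v in II, φ (u, v) ^ 4) ≤ 16 * N * G := by
    have hcA0 : 0 ≤ ∫ v in II, A v := integral_nonneg hA0
    have h4sg : 0 ≤ 4 * (Real.sqrt N * Real.sqrt G) := by positivity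
    calc (∫ u in II, ∫ v in II, φ (u, v) ^ 4) ≤ (∫ u in II, B u) * (∫ v in II, A v) := hmain1
      _ ≤ (4 * (Real.sqrt N * Real.sqrt G)) * (4 * (Real.sqrt N * Real.sqrt G)) :=
          mul_le_mul hB4 hA4 hcA0 h4sg
      _ = 16 * (Real.sqrt N * Real.sqrt N) * (Real.sqrt G * Real.sqrt G) := by ring
      _ = 16 * N * G := by rw [← hNeq, ← hGeq]
  rw [hL4, hN, hG]
  exact hfinal

end Lady

/-- Ladyzhenskaya's interpolation inequality on the two-dimensional torus:
`∫|f|⁴ ≤ C (∫|f|²)(∫|∇f|²)` for mean-zero `f ∈ H¹(T²)`. -/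
theorem ladyzhenskaya_interpolation :
    ∃ C > (0:ℝ), ∀ f : D → ℝ, ContDiff ℝ 1 f → PeriodicT f →
      (∫ x in Torus, f x) = 0 →
      (∫ x in Torus, (f x) ^ 4) ≤
        C * (∫ x in Torus, (f x) ^ 2) * (∫ x in Torus, ∑ j : Fin 2, (pd j f x) ^ 2) := by
  exact ⟨16, by norm_num, fun f hf _ hm => Lady.main hf hm⟩
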